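/- Consider the semi-naive evaluation of linear transitive closure on a finite directed graph (V,E): δT^0 = E, T^0 = E, and for i ≥ 1, δT^i = {(x,y) : ∃z, (x,z) ∈ δT^{i-1}, (z,y) ∈ E, (x,y) ∉ T^{i-1}} and T^i = T^{i-1} ∪ δT^i. Then the relations δT^0, δT^1, δT^2, … are pairwise disjoint, and their union over all i equals the transitive closure of E. -/
import Mathlib


/-- One step of semi-naive evaluation of linear transitive closure:
`semiNaive E i = (δT^i, T^i)`. -/
def semiNaive {V : Type*} (E : V → V → Prop) : ℕ → (V → V → Prop) × (V → V → Prop)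
  | 0 => (E, E)
  | i + 1 =>
    let d := (semiNaive E i).1
    let t := (semiNaive E i).2
    let d' := fun x y => (∃ z, d x z ∧ E z y) ∧ ¬ t x y
    (d', fun x y => t x y ∨ d' x y)

theorem stmt_8 {V : Type*} [Fintype V] (E : V → V → Prop) :
    (∀ i j : ℕ, i ≠ j → ∀ x y : V,
      ¬ ((semiNaive E i).1 x y ∧ (semiNaive E j).1 x y)) ∧
    (∀ x y : V, (∃ i : ℕ, (semiNaive E i).1 x y) ↔ Relation.TransGen E x y) := by
  -- T^i is the union of δT^j for j ≤ i
  have hT : ∀ i (x y : V), (semiNaive E i).2 x y ↔ ∃ j ≤ i, (semiNaive E j).1 x y := by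
    intro i
    induction i with
    | zero =>
      intro x y
      simp [semiNaive]
    | succ i ih =>
      intro x y
      constructor
      · rintro (h | h)
        · obtain ⟨j, hj, h⟩ := (ih x y).mp h
          exact ⟨j, Nat.le_succ_of_le hj, h⟩
        · exact ⟨i + 1, le_refl _, h⟩
      · rintro ⟨j, hj, h⟩
        rcases Nat.lt_or_ge j (i + 1) with hlt | hge
        · exact Or.inl ((ih x y).mpr ⟨j, Nat.lt_succ_iff.mp hlt, h⟩)
        · have : j = i + 1 := le_antisymm hj hge
          subst this
          exact Or.inr h
  -- δT^{i+1} excludes T^i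
  have hd : ∀ i (x y : V), (semiNaive E (i + 1)).1 x y → ¬ (semiNaive E i).2 x y := by
    intro i x y h
    exact h.2
  have disj : ∀ i j : ℕ, i ≠ j → ∀ x y : V,
      ¬ ((semiNaive E i).1 x y ∧ (semiNaive E j).1 x y) := by
    have key : ∀ i j : ℕ, i < j → ∀ x y : V,
        ¬ ((semiNaive E i).1 x y ∧ (semiNaive E j).1 x y) := by
      intro i j hij x y ⟨h1, h2⟩
      obtain ⟨k, rfl⟩ := Nat.exists_eq_add_of_lt hij
      exact hd _ x y h2 ((hT _ x y).mpr ⟨i, by omega, h1⟩)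
    intro i j hij x y h
    rcases Nat.lt_or_ge i j with hlt | hge
    · exact key i j hlt x y h
    · exact key j i (lt_of_le_of_ne hge (Ne.symm hij)) x y ⟨h.2, h.1⟩
  refine ⟨disj, fun x y => ⟨?_, ?_⟩⟩
  · rintro ⟨i, h⟩
    induction i generalizing y with
    | zero => exact Relation.TransGen.single h
    | succ i ih =>
      obtain ⟨⟨z, hz, hE⟩, _⟩ := h
      exact Relation.TransGen.tail (ih z hz) hE
  · intro h
    -- first show ∃ i, T^i x y
    have hTex : ∃ i, (semiNaive E i).2 x y := by
      induction h with
      | single h => exact ⟨0, h⟩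
      | @tail b c _ hE ih =>
        obtain ⟨i, hi⟩ := ih
        obtain ⟨j, hj, hdj⟩ := (hT i x b).mp hi
        by_cases hxy : (semiNaive E j).2 x c
        · exact ⟨j, hxy⟩
        · exact ⟨j + 1, Or.inr ⟨⟨b, hdj, hE⟩, hxy⟩⟩
    obtain ⟨i, hi⟩ := hTex
    obtain ⟨j, _, hj⟩ := (hT i x y).mp hi
    exact ⟨j, hj⟩
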